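/- Let T be a rooted unordered tree with adjacency matrix A, and let A_{UH(T)−1} be the adjacency matrix of the regular leaning tree of order UH(T)−1. Then λ₁(A) ≤ λ₁(A_{UH(T)−1}). -/

import Mathlib

open Matrix

/-- An (unlabelled) planted plane tree: a root with an ordered list of subtrees. -/
inductive PTree where
  | node : List PTree → PTree

/-- The list of subtrees of the root. -/
def PTree.children : PTree → List PTree
  | .node c => c

/-- The number of nodes. -/
def PTree.size : PTree → ℕ
  | .node c => 1 + (c.attach.map (fun t => PTree.size t.1)).sum
decreasing_by have := List.sizeOf_lt_of_mem t.2; simp at *; omega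

/-- The regular leaning tree of order `k`: `T 0` is a single node, and the
root of `T (k+1)` has subtrees `T k, T (k-1), ..., T 0` in that order. -/
def leaning : ℕ → PTree
  | 0 => .node []
  | (k + 1) => .node (leaning k :: (leaning k).children)

/-- `uhL r l` is the maximum Ulam–Harris label occurring in the forest `l`,
when the first root of `l` receives label `r`, subsequent roots receive labels
`r + 1, r + 2, ...`, and the children of a node labelled `s` receive labels
`s + 1, s + 2, ...`. -/
def uhL : ℕ → List PTree → ℕ
  | _, [] => 0
  | r, (.node c) :: ts => max r (max (uhL (r + 1) c) (uhL (r + 1) ts))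

/-- The Ulam–Harris number of a planted plane tree (root labelled `1`). -/
def planeUH (t : PTree) : ℕ := uhL 1 [t]

/-- `maxDegL l` is the maximum, over all nodes `v` of trees in the forest `l`,
of the degree of `v` in the planted tree (number of children plus one, the
root being attached to an extra planting edge). -/
def maxDegL : List PTree → ℕ
  | [] => 0
  | (.node c) :: ts => max (c.length + 1) (max (maxDegL c) (maxDegL ts))

/-- The maximum vertex degree of a planted plane tree. -/
def maxDeg (t : PTree) : ℕ := maxDegL [t]

/-- Two plane trees represent the same unordered rooted tree: one can be
obtained from the other by reordering the children of each node. -/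
inductive TEquiv : PTree → PTree → Prop
  | node (c d l : List PTree) (h1 : List.Forall₂ TEquiv c l) (h2 : l.Perm d) :
      TEquiv (.node c) (.node d)

/-- The Ulam–Harris number of an unordered rooted tree: the minimum of the
plane Ulam–Harris number over all plane orderings. -/
noncomputable def UH (t : PTree) : ℕ :=
  sInf {m : ℕ | ∃ t', TEquiv t t' ∧ planeUH t' = m}


/-- The regular leaning tree of order `k` as a graph.  Vertices are subsets of
`{0, ..., k-1}` (the root is `∅`), and the children of a vertex `S` are the
sets `insert j S` with `j` smaller than every element of `S`; thus the root
`∅` has subtrees that are leaning trees of orders `k-1, k-2, ..., 0`. -/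
def leaningGraph (k : ℕ) : SimpleGraph (Finset (Fin k)) where
  Adj S T := (∃ j ∉ S, T = insert j S ∧ ∀ i ∈ S, j < i) ∨
    (∃ j ∉ T, S = insert j T ∧ ∀ i ∈ T, j < i)
  symm := ⟨fun S T h => h.symm⟩
  loopless := by
    constructor
    intro S h
    rcases h with ⟨j, hj, hT, -⟩ | ⟨j, hj, hT, -⟩ <;>
      exact hj (by rw [hT]; exact Finset.mem_insert_self j S)

noncomputable instance (k : ℕ) : DecidableRel (leaningGraph k).Adj :=
  Classical.decRel _

/-- Valid addresses (paths of child indices from the root) in a plane tree. -/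
def isAddr : PTree → List ℕ → Prop
  | _, [] => True
  | .node c, i :: is => ∃ h : i < c.length, isAddr (c.get ⟨i, h⟩) is

/-- The graph underlying a plane tree: vertices are node addresses, and edges
join each node to its children. -/
def treeGraph (t : PTree) : SimpleGraph {l : List ℕ // isAddr t l} where
  Adj a b := (∃ i : ℕ, b.1 = a.1 ++ [i]) ∨ (∃ i : ℕ, a.1 = b.1 ++ [i])
  symm := ⟨fun a b h => h.symm⟩
  loopless := by
    constructor
    intro a h
    rcases h with ⟨i, h⟩ | ⟨i, h⟩ <;> simpa using congrArg List.length h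

/-! ### labels along an address -/

def subAt : PTree → List ℕ → PTree
  | t, [] => t
  | .node c, i :: is => subAt (c.getD i (.node [])) is

def labs : ℕ → PTree → List ℕ → List ℕ
  | _, _, [] => []
  | r, .node c, i :: is => (r + 1 + i) :: labs (r + 1 + i) (c.getD i (.node [])) is

lemma labs_chain : ∀ (l : List ℕ) (r : ℕ) (t : PTree), List.Chain (· < ·) r (labs r t l)
  | [], r, t => by cases t; simp [labs]; exact List.isChain_singleton r
  | i :: is, r, .node c => by
    rw [labs]
    exact List.Chain.cons (by omega) (labs_chain is (r + 1 + i) _)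

lemma chain_lt_of_mem {r m : ℕ} {L : List ℕ} (h : List.Chain (· < ·) r L) (hm : m ∈ L) :
    r < m := by
  induction L generalizing r with
  | nil => simp at hm
  | cons a L ih =>
    rcases List.chain_cons.mp h with ⟨h1, h2⟩
    rcases List.mem_cons.mp hm with rfl | hm'
    · exact h1
    · exact lt_trans h1 (ih h2 hm')

lemma chain_le_getLastD {r : ℕ} {L : List ℕ} (h : List.Chain (· < ·) r L) :
    (∀ m ∈ L, m ≤ L.getLastD r) ∧ r ≤ L.getLastD r := by
  induction L generalizing r with
  | nil => simp
  | cons a L ih =>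
    rcases List.chain_cons.mp h with ⟨h1, h2⟩
    obtain ⟨ih1, ih2⟩ := ih h2
    have hgl : (a :: L).getLastD r = L.getLastD a := by
      cases L <;> simp [List.getLastD]
    constructor
    · intro m hm
      rw [hgl]
      rcases List.mem_cons.mp hm with rfl | hm'
      · exact ih2
      · exact ih1 m hm'
    · rw [hgl]; omega

lemma labs_append : ∀ (l1 l2 : List ℕ) (r : ℕ) (t : PTree),
    labs r t (l1 ++ l2) = labs r t l1 ++ labs ((labs r t l1).getLastD r) (subAt t l1) l2
  | [], l2, r, t => by cases t; simp [labs, subAt]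
  | i :: is, l2, r, .node c => by
    rw [List.cons_append, labs, labs, subAt]
    have := labs_append is l2 (r + 1 + i) (c.getD i (.node []))
    rw [this]
    have hgl : ((r + 1 + i) :: labs (r + 1 + i) (c.getD i (.node [])) is).getLastD r
        = (labs (r + 1 + i) (c.getD i (.node [])) is).getLastD (r + 1 + i) := by
      cases labs (r + 1 + i) (c.getD i (.node [])) is <;> simp [List.getLastD]
    rw [hgl]
    simp

lemma isAddr_append_left : ∀ (l1 l2 : List ℕ) (t : PTree), isAddr t (l1 ++ l2) → isAddr t l1
  | [], l2, t, _ => by cases t <;> trivial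
  | i :: is, l2, .node c, h => by
    obtain ⟨hi, h2⟩ := h
    exact ⟨hi, isAddr_append_left is l2 _ h2⟩

lemma uh_idx_le : ∀ (ts : List PTree) (i r : ℕ), i < ts.length → r + i ≤ uhL r ts
  | [], i, r, h => by simp at h
  | (.node c) :: rest, 0, r, h => by rw [uhL]; omega
  | (.node c) :: rest, i + 1, r, h => by
    rw [uhL]
    have := uh_idx_le rest i (r + 1) (by simpa using h)
    omega

lemma uh_get_le : ∀ (ts : List PTree) (i r : ℕ), i < ts.length →
    uhL (r + i) [ts.getD i (.node [])] ≤ uhL r ts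
  | [], i, r, h => by simp at h
  | (.node c) :: rest, 0, r, h => by
    simp only [List.getD_cons_zero, Nat.add_zero]
    rw [uhL, uhL, uhL]
    omega
  | (.node c) :: rest, i + 1, r, h => by
    simp only [List.getD_cons_succ]
    have heq : r + (i + 1) = (r + 1) + i := by omega
    rw [heq]
    have := uh_get_le rest i (r + 1) (by simpa using h)
    rw [uhL]
    omega

lemma labs_le_uh : ∀ (l : List ℕ) (t : PTree) (r : ℕ), isAddr t l →
    ∀ m ∈ labs r t l, m ≤ uhL r [t]
  | [], t, r, _, m, hm => by cases t; simp [labs] at hm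
  | i :: is, .node c, r, h, m, hm => by
    obtain ⟨hi, h2⟩ := h
    rw [labs] at hm
    have hgetD : c.getD i (.node []) = c.get ⟨i, hi⟩ := by
      rw [List.getD_eq_getElem _ _ hi]; simp
    have huh : uhL r [PTree.node c] = max r (max (uhL (r + 1) c) 0) := by
      rw [uhL, uhL]
    rcases List.mem_cons.mp hm with rfl | hm'
    · have := uh_idx_le c i (r + 1) hi
      omega
    · have h3 : m ≤ uhL (r + 1 + i) [c.getD i (.node [])] := by
        rw [hgetD] at hm' ⊢
        exact labs_le_uh is _ (r + 1 + i) h2 m hm'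
      have h4 := uh_get_le c i (r + 1) hi
      omega

lemma labs_inj : ∀ (l1 l2 : List ℕ) (t : PTree) (r : ℕ), isAddr t l1 → isAddr t l2 →
    labs r t l1 = labs r t l2 → l1 = l2
  | [], [], t, r, _, _, _ => rfl
  | [], j :: js, .node c, r, _, _, h => by rw [labs, labs] at h; simp at h
  | i :: is, [], .node c, r, _, _, h => by rw [labs, labs] at h; simp at h
  | i :: is, j :: js, .node c, r, h1, h2, h => by
    rw [labs, labs] at h
    injection h with hh ht
    have hij : i = j := by omega
    subst hij
    obtain ⟨hi, h1'⟩ := h1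
    obtain ⟨_, h2'⟩ := h2
    have hgetD : c.getD i (.node []) = c.get ⟨i, hi⟩ := by
      rw [List.getD_eq_getElem _ _ hi]; simp
    rw [hgetD] at ht
    rw [labs_inj is js _ _ h1' h2' ht]

lemma sorted_eq_of_mem_iff : ∀ (L1 L2 : List ℕ), List.Pairwise (· < ·) L1 →
    List.Pairwise (· < ·) L2 → (∀ m, m ∈ L1 ↔ m ∈ L2) → L1 = L2 := by
  intro L1 L2 h1 h2 hmem
  apply List.Perm.eq_of_pairwise' h1 h2
  apply List.perm_of_nodup_nodup_toFinset_eq h1.nodup h2.nodup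
  ext m
  simp [hmem m]

lemma labs_sorted (l : List ℕ) (r : ℕ) (t : PTree) : List.Pairwise (· < ·) (labs r t l) := by
  have := labs_chain l r t
  rw [List.Chain, List.isChain_iff_pairwise] at this
  exact (List.pairwise_cons.mp this).2

def phi (t : PTree) (l : {l : List ℕ // isAddr t l}) : Finset (Fin (planeUH t - 1)) :=
  Finset.univ.filter (fun j => planeUH t - (j : ℕ) ∈ labs 1 t l.1)

lemma mem_labs_facts {t : PTree} {l : List ℕ} (hl : isAddr t l) {m : ℕ}
    (hm : m ∈ labs 1 t l) : 1 < m ∧ m ≤ planeUH t :=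
  ⟨chain_lt_of_mem (labs_chain l 1 t) hm, labs_le_uh l t 1 hl m hm⟩

lemma phi_inj (t : PTree) : Function.Injective (phi t) := by
  have aux : ∀ (a b : {l : List ℕ // isAddr t l}), phi t a = phi t b →
      ∀ m, m ∈ labs 1 t a.1 → m ∈ labs 1 t b.1 := by
    intro a b hab m hm
    obtain ⟨h1, h2⟩ := mem_labs_facts a.2 hm
    set n := planeUH t with hn
    have hj : n - m < n - 1 := by omega
    have hmem : (⟨n - m, hj⟩ : Fin (n - 1)) ∈ phi t a := by
      simp only [phi, Finset.mem_filter, Finset.mem_univ, true_and]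
      have : n - (n - m) = m := by omega
      rw [this]
      exact hm
    rw [hab] at hmem
    simp only [phi, Finset.mem_filter, Finset.mem_univ, true_and] at hmem
    have : n - (n - m) = m := by omega
    rwa [this] at hmem
  intro a b h
  apply Subtype.ext
  apply labs_inj a.1 b.1 t 1 a.2 b.2
  exact sorted_eq_of_mem_iff _ _ (labs_sorted _ _ _) (labs_sorted _ _ _)
    (fun m => ⟨aux a b h m, aux b a h.symm m⟩)

lemma phi_adj_aux (t : PTree) (a b : {l : List ℕ // isAddr t l}) (i : ℕ)
    (hb : b.1 = a.1 ++ [i]) :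
    (leaningGraph (planeUH t - 1)).Adj (phi t a) (phi t b) := by
  set n := planeUH t with hn
  set L := labs 1 t a.1 with hL
  set r' := L.getLastD 1 with hr'
  have hchain := labs_chain a.1 1 t
  have hlabsb : labs 1 t b.1 = L ++ [r' + 1 + i] := by
    rw [hb, labs_append, ← hL, ← hr']
    cases hsub : subAt t a.1 with
    | node c' => rw [labs, labs]
  have hmb_mem : r' + 1 + i ∈ labs 1 t b.1 := by
    rw [hlabsb]; simp
  obtain ⟨hmb1, hmb2⟩ := mem_labs_facts b.2 hmb_mem
  have hLle : ∀ m ∈ L, m ≤ r' := (chain_le_getLastD hchain).1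
  have hr'1 : 1 ≤ r' := (chain_le_getLastD hchain).2
  have hjlt : n - (r' + 1 + i) < n - 1 := by omega
  change _ ∨ _
  refine Or.inl ⟨⟨n - (r' + 1 + i), hjlt⟩, ?_, ?_, ?_⟩
  · simp only [phi, Finset.mem_filter, Finset.mem_univ, true_and]
    have : n - (n - (r' + 1 + i)) = r' + 1 + i := by omega
    rw [this]
    intro hmem
    have := hLle _ hmem
    omega
  · ext j'
    simp only [phi, Finset.mem_filter, Finset.mem_univ, true_and, Finset.mem_insert, hlabsb,
      List.mem_append, List.mem_singleton]
    constructor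
    · rintro (h1 | h2)
      · right; exact h1
      · left
        apply Fin.ext
        have hj' : (j' : ℕ) < n - 1 := j'.2
        simp only
        omega
    · rintro (rfl | h2)
      · right
        simp only
        omega
      · left; exact h2
  · intro x hx
    simp only [phi, Finset.mem_filter, Finset.mem_univ, true_and] at hx
    have := hLle _ hx
    have hx2 : (x : ℕ) < n - 1 := x.2
    rw [Fin.lt_def]
    simp only
    omega

lemma phi_adj (t : PTree) (a b : {l : List ℕ // isAddr t l})
    (h : (treeGraph t).Adj a b) :
    (leaningGraph (planeUH t - 1)).Adj (phi t a) (phi t b) := by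
  change _ ∨ _ at h
  rcases h with ⟨i, hi⟩ | ⟨i, hi⟩
  · exact phi_adj_aux t a b i hi
  · exact (phi_adj_aux t b a i hi).symm

/-! ### permutations and TEquiv -/

lemma perm_index {α : Type*} {l d : List α} (h : l.Perm d) :
    ∃ σ : Fin l.length → Fin d.length, Function.Injective σ ∧ ∀ i, d.get (σ i) = l.get i := by
  induction h with
  | nil => exact ⟨id, fun a b hab => hab, fun i => i.elim0⟩
  | @cons x l' d' h ih =>
    obtain ⟨σ, hinj, hget⟩ := ih
    refine ⟨fun i => Fin.cases ⟨0, Nat.succ_pos _⟩ (fun j => (σ j).succ) i, ?_, ?_⟩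
    · intro a b hab
      induction a using Fin.cases with
      | zero =>
        induction b using Fin.cases with
        | zero => rfl
        | succ b' =>
          simp only [Fin.cases_zero, Fin.cases_succ] at hab
          exact absurd (Fin.ext_iff.mp hab) (by simp)
      | succ a' =>
        induction b using Fin.cases with
        | zero =>
          simp only [Fin.cases_zero, Fin.cases_succ] at hab
          exact absurd (Fin.ext_iff.mp hab) (by simp)
        | succ b' =>
          simp only [Fin.cases_succ] at hab
          rw [hinj (Fin.succ_injective _ hab)]
    · intro i
      induction i using Fin.cases with
      | zero => rfl
      | succ j =>
        simp only [Fin.cases_succ]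
        show d'.get (σ j) = l'.get j
        exact hget j
  | swap x y l' =>
    refine ⟨fun i => Equiv.swap ⟨0, Nat.succ_pos _⟩ ⟨1, Nat.succ_lt_succ (Nat.succ_pos _)⟩ i,
      (Equiv.swap _ _).injective, ?_⟩
    intro i
    rcases i with ⟨k, hk⟩
    match k, hk with
    | 0, hk =>
      rw [show (⟨0, hk⟩ : Fin (y :: x :: l').length) = ⟨0, Nat.succ_pos _⟩ from rfl,
        ]
      simp only [Equiv.swap_apply_left]
      rfl
    | 1, hk =>
      rw [show (⟨1, hk⟩ : Fin (y :: x :: l').length)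
          = ⟨1, Nat.succ_lt_succ (Nat.succ_pos _)⟩ from rfl,
        ]
      simp only [Equiv.swap_apply_right]
      rfl
    | (k + 2), hk =>
      have hne : Equiv.swap (⟨0, Nat.succ_pos _⟩ : Fin (y :: x :: l').length)
          ⟨1, Nat.succ_lt_succ (Nat.succ_pos _)⟩ ⟨k + 2, hk⟩ = ⟨k + 2, hk⟩ :=
        Equiv.swap_apply_of_ne_of_ne (by simp [Fin.ext_iff]) (by simp [Fin.ext_iff])
      simp only [hne]
      rfl
  | trans h1 h2 ih1 ih2 =>
    obtain ⟨σ1, hinj1, hget1⟩ := ih1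
    obtain ⟨σ2, hinj2, hget2⟩ := ih2
    exact ⟨σ2 ∘ σ1, hinj2.comp hinj1, fun i => (hget2 (σ1 i)).trans (hget1 i)⟩

theorem tequiv_refl : ∀ t : PTree, TEquiv t t
  | .node c =>
    TEquiv.node c c c (List.forall₂_same.mpr (fun x hx => tequiv_refl x)) (List.Perm.refl c)
decreasing_by have := List.sizeOf_lt_of_mem hx; simp at *; omega

def GoodMap (t t' : PTree) : Prop :=
  ∃ f : {l : List ℕ // isAddr t l} → {l : List ℕ // isAddr t' l},
    Function.Injective f ∧ (∀ a b, (treeGraph t).Adj a b → (treeGraph t').Adj (f a) (f b)) ∧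
      ∀ a, a.1 = [] → (f a).1 = []

def buildMap (c d : List PTree) (σ : Fin c.length → Fin d.length)
    (F : (i : Fin c.length) → {L : List ℕ // isAddr (c.get i) L} →
      {L : List ℕ // isAddr (d.get (σ i)) L}) :
    {L : List ℕ // isAddr (.node c) L} → {L : List ℕ // isAddr (.node d) L}
  | ⟨[], _⟩ => ⟨[], trivial⟩
  | ⟨i :: is, h⟩ =>
    let hi : i < c.length := h.choose
    let r := F ⟨i, hi⟩ ⟨is, h.choose_spec⟩
    ⟨((σ ⟨i, hi⟩ : Fin d.length) : ℕ) :: r.1, (σ ⟨i, hi⟩).2, r.2⟩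

lemma buildMap_inj {c d : List PTree} (σ : Fin c.length → Fin d.length)
    (F : (i : Fin c.length) → {L : List ℕ // isAddr (c.get i) L} →
      {L : List ℕ // isAddr (d.get (σ i)) L})
    (hσ : Function.Injective σ) (hF : ∀ i, Function.Injective (F i)) :
    Function.Injective (buildMap c d σ F) := by
  rintro ⟨L1, h1⟩ ⟨L2, h2⟩ heq
  match L1, h1, L2, h2, heq with
  | [], h1, [], h2, heq => rfl
  | [], h1, i :: is, h2, heq => have := congrArg Subtype.val heq; simp [buildMap] at this
  | i :: is, h1, [], h2, heq => have := congrArg Subtype.val heq; simp [buildMap] at this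
  | i :: is, h1, j :: js, h2, heq =>
    have heq := congrArg Subtype.val heq
    simp only [buildMap, Subtype.mk.injEq, List.cons.injEq] at heq
    obtain ⟨hhead, htail⟩ := heq
    have hij : (⟨i, h1.choose⟩ : Fin c.length) = ⟨j, h2.choose⟩ := hσ (Fin.ext hhead)
    have hij' : i = j := Fin.mk.injEq _ _ _ _ ▸ hij
    subst hij'
    have := hF ⟨i, h1.choose⟩ (a₁ := ⟨is, h1.choose_spec⟩) (a₂ := ⟨js, h2.choose_spec⟩)
      (Subtype.ext htail)
    simp only [Subtype.mk.injEq] at this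
    simp [this]

lemma buildMap_root {c d : List PTree} (σ : Fin c.length → Fin d.length)
    (F : (i : Fin c.length) → {L : List ℕ // isAddr (c.get i) L} →
      {L : List ℕ // isAddr (d.get (σ i)) L}) :
    ∀ a, a.1 = [] → (buildMap c d σ F a).1 = [] := by
  rintro ⟨L, h⟩ hL
  subst hL
  rfl

lemma buildMap_adj_aux {c d : List PTree} (σ : Fin c.length → Fin d.length)
    (F : (i : Fin c.length) → {L : List ℕ // isAddr (c.get i) L} →
      {L : List ℕ // isAddr (d.get (σ i)) L})
    (hFadj : ∀ i a b, (treeGraph (c.get i)).Adj a b →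
      (treeGraph (d.get (σ i))).Adj (F i a) (F i b))
    (hFroot : ∀ i a, a.1 = [] → (F i a).1 = [])
    (a b : {L : List ℕ // isAddr (.node c) L}) (x : ℕ) (hx : b.1 = a.1 ++ [x]) :
    (treeGraph (.node d)).Adj (buildMap c d σ F a) (buildMap c d σ F b) := by
  rcases a with ⟨L, hL⟩
  rcases b with ⟨M, hM⟩
  simp only at hx
  match L, hL, M, hM, hx with
  | [], hL, M, hM, hx =>
    simp only [List.nil_append] at hx
    subst hx
    change _ ∨ _
    left
    refine ⟨(σ ⟨x, hM.choose⟩ : ℕ), ?_⟩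
    simp only [buildMap]
    rw [hFroot _ _ rfl]
    simp
  | i :: is, hL, M, hM, hx =>
    subst hx
    have hMc : ((i :: is) ++ [x] : List ℕ) = i :: (is ++ [x]) := rfl
    -- the two head indices agree
    have hch : (⟨i, hL.choose⟩ : Fin c.length) = ⟨i, hM.choose⟩ := rfl
    have hadj : (treeGraph (c.get ⟨i, hL.choose⟩)).Adj ⟨is, hL.choose_spec⟩
        ⟨is ++ [x], hM.choose_spec⟩ := by change _ ∨ _; exact Or.inl ⟨x, rfl⟩
    have := hFadj _ _ _ hadj
    change _ ∨ _ at this ⊢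
    rcases this with ⟨w, hw⟩ | ⟨w, hw⟩
    · left
      exact ⟨w, by simp only [buildMap]; simp [hw]⟩
    · right
      exact ⟨w, by simp only [buildMap]; simp [hw]⟩

theorem tequiv_good : ∀ (t t' : PTree), TEquiv t t' → GoodMap t t'
  | .node c, .node d, h => by
    have hex : ∃ l, List.Forall₂ TEquiv c l ∧ l.Perm d := by
      cases h with
      | node c d l h1 h2 => exact ⟨l, h1, h2⟩
    obtain ⟨l, h1, h2⟩ := hex
    obtain ⟨σ0, hσ0inj, hσ0get⟩ := perm_index h2
    have hlen : c.length = l.length := h1.length_eq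
    set σ : Fin c.length → Fin d.length := fun i => σ0 (Fin.cast hlen i) with hσ
    have hσinj : Function.Injective σ := fun a b hab => by
      have h' := hσ0inj hab
      have h'' := congrArg Fin.val h'
      simp at h''
      exact Fin.ext h''
    have hchild : ∀ i : Fin c.length, GoodMap (c.get i) (d.get (σ i)) := by
      intro i
      have he : TEquiv (c.get i) (l.get (Fin.cast hlen i)) :=
        (List.forall₂_iff_get.mp h1).2 i i.2 (by omega)
      have hgd : d.get (σ i) = l.get (Fin.cast hlen i) := hσ0get (Fin.cast hlen i)
      rw [hgd]
      exact tequiv_good _ _ he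
    choose F hFinj hFadj hFroot using hchild
    refine ⟨buildMap c d σ F, buildMap_inj σ F hσinj hFinj, ?_, buildMap_root σ F⟩
    intro a b hab
    change _ ∨ _ at hab
    rcases hab with ⟨x, hx⟩ | ⟨x, hx⟩
    · exact buildMap_adj_aux σ F hFadj hFroot a b x hx
    · exact ((treeGraph _).adj_symm (buildMap_adj_aux σ F hFadj hFroot b a x hx))
termination_by t _ _ => sizeOf t
decreasing_by
  have hmem : c.get i ∈ c := by rw [show c.get i = c.get ⟨i.1, i.2⟩ from rfl]; exact List.get_mem c ⟨i.1, i.2⟩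
  have := List.sizeOf_lt_of_mem hmem
  simp at *
  omega

variable {n : Type*} [Fintype n] [DecidableEq n]

lemma diag_quad (d : n → ℝ) (z : n → ℝ) :
    z ⬝ᵥ (Matrix.diagonal d) *ᵥ z = ∑ i, d i * (z i)^2 := by
  simp [dotProduct, Matrix.mulVec_diagonal, sq]
  ring_nf
  exact Finset.sum_congr rfl fun i _ => by ring

lemma quad_le_sSup (B : Matrix n n ℝ) (hB : B.IsHermitian) (x : n → ℝ) :
    x ⬝ᵥ B *ᵥ x ≤ sSup (spectrum ℝ B) * (x ⬝ᵥ x) := by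
  classical
  set U : Matrix n n ℝ := (hB.eigenvectorUnitary : Matrix n n ℝ) with hU
  set y : n → ℝ := star U *ᵥ x with hy
  have hstar : star U = Uᵀ := by
    ext i j; simp [Matrix.conjTranspose]
  have hxU : x ᵥ* U = y := by
    rw [hy, hstar, Matrix.mulVec_transpose]
  have hkey : x ⬝ᵥ B *ᵥ x = y ⬝ᵥ (Matrix.diagonal (hB.eigenvalues)) *ᵥ y := by
    conv_lhs => rw [hB.spectral_theorem]
    have : (RCLike.ofReal ∘ hB.eigenvalues : n → ℝ) = hB.eigenvalues := by
      ext i; simp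
    rw [this, Unitary.conjStarAlgAut_apply, mul_assoc, ← Matrix.mulVec_mulVec, dotProduct_mulVec, hxU,
      ← Matrix.mulVec_mulVec]
  have hyy : y ⬝ᵥ y = x ⬝ᵥ x := by
    rw [hy, dotProduct_mulVec (star U *ᵥ x) (star U) x]
    have : (star U *ᵥ x) ᵥ* star U = x := by
      rw [hstar, ← Matrix.mulVec_transpose, Matrix.transpose_transpose,
        Matrix.mulVec_mulVec, ← hstar]
      rw [show U * star U = 1 from Matrix.mem_unitaryGroup_iff.mp hB.eigenvectorUnitary.2]
      simp
    rw [this]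
  have hbdd : BddAbove (spectrum ℝ B) := (Matrix.finite_real_spectrum).bddAbove
  have hle : ∀ i, hB.eigenvalues i ≤ sSup (spectrum ℝ B) := fun i =>
    le_csSup hbdd (by rw [hB.spectrum_real_eq_range_eigenvalues]; exact Set.mem_range_self i)
  rw [hkey, diag_quad, ← hyy]
  have : y ⬝ᵥ y = ∑ i, (y i)^2 := by simp [dotProduct, sq]
  rw [this, Finset.mul_sum]
  exact Finset.sum_le_sum fun i _ => by
    have := sq_nonneg (y i); nlinarith [hle i]

lemma spectral_mono {V W : Type*} [Fintype V] [Fintype W] [DecidableEq V] [DecidableEq W]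
    [Nonempty V] (G : SimpleGraph V) (H : SimpleGraph W) [DecidableRel G.Adj]
    [DecidableRel H.Adj] (f : V → W) (hf : Function.Injective f)
    (hadj : ∀ u v, G.Adj u v → H.Adj (f u) (f v)) :
    sSup (spectrum ℝ (G.adjMatrix ℝ)) ≤ sSup (spectrum ℝ (H.adjMatrix ℝ)) := by
  classical
  set A := G.adjMatrix ℝ with hA'
  set B := H.adjMatrix ℝ with hB'
  have hA : A.IsHermitian := by
    rw [Matrix.IsHermitian, Matrix.conjTranspose_eq_transpose_of_trivial]
    exact G.isSymm_adjMatrix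
  have hB : B.IsHermitian := by
    rw [Matrix.IsHermitian, Matrix.conjTranspose_eq_transpose_of_trivial]
    exact H.isSymm_adjMatrix
  rw [hA.spectrum_real_eq_range_eigenvalues]
  apply csSup_le (Set.range_nonempty _)
  rintro μ ⟨j, rfl⟩
  set v : V → ℝ := ⇑(hA.eigenvectorBasis j) with hv
  have hvv : v ⬝ᵥ v = 1 := by
    have h1 := hA.eigenvectorBasis.orthonormal.1 j
    have h2 : @inner ℝ _ _ (hA.eigenvectorBasis j) (hA.eigenvectorBasis j) = (1:ℝ) := by
      rw [real_inner_self_eq_norm_mul_norm, h1]; norm_num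
    rw [← h2]
    simp only [PiLp.inner_apply, dotProduct, RCLike.inner_apply, conj_trivial, hv]
  have hmv : A *ᵥ v = hA.eigenvalues j • v := hA.mulVec_eigenvectorBasis j
  have heq : hA.eigenvalues j = v ⬝ᵥ A *ᵥ v := by
    rw [hmv, dotProduct_smul, smul_eq_mul, hvv, mul_one]
  set a : V → ℝ := fun u => |v u| with ha
  have hAnn : ∀ u w, 0 ≤ A u w := fun u w => by
    rw [hA']; simp [SimpleGraph.adjMatrix]; split <;> norm_num
  have hBnn : ∀ u w, 0 ≤ B u w := fun u w => by
    rw [hB']; simp [SimpleGraph.adjMatrix]; split <;> norm_num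
  have step1 : v ⬝ᵥ A *ᵥ v ≤ a ⬝ᵥ A *ᵥ a := by
    simp only [dotProduct, Matrix.mulVec]
    apply Finset.sum_le_sum
    intro u _
    rw [Finset.mul_sum, Finset.mul_sum]
    apply Finset.sum_le_sum
    intro w _
    have h1 : v u * (A u w * v w) ≤ |v u * (A u w * v w)| := le_abs_self _
    have h2 : |v u * (A u w * v w)| = a u * (A u w * a w) := by
      rw [ha]; simp only [abs_mul, abs_of_nonneg (hAnn u w)]; try ring
    linarith
  set y : W → ℝ := Function.extend f a (fun _ => 0) with hyd
  have hyf : ∀ u, y (f u) = a u := fun u => hf.extend_apply a _ u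
  have hynn : ∀ w, 0 ≤ y w := by
    intro w
    rw [hyd]
    by_cases h : ∃ u, f u = w
    · obtain ⟨u, rfl⟩ := h; rw [hf.extend_apply]; exact abs_nonneg _
    · rw [Function.extend_apply' _ _ _ h]
  have hy0 : ∀ w, w ∉ Finset.univ.image f → y w = 0 := by
    intro w hw
    rw [hyd, Function.extend_apply']
    rintro ⟨u, rfl⟩
    exact hw (Finset.mem_image_of_mem f (Finset.mem_univ u))
  have step2 : a ⬝ᵥ A *ᵥ a ≤ y ⬝ᵥ B *ᵥ y := by
    have lhs_eq : a ⬝ᵥ A *ᵥ a = ∑ p ∈ Finset.univ ×ˢ Finset.univ,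
        a p.1 * (A p.1 p.2 * a p.2) := by
      rw [Finset.sum_product]
      simp [dotProduct, Matrix.mulVec, Finset.mul_sum]
    have rhs_eq : y ⬝ᵥ B *ᵥ y = ∑ p ∈ Finset.univ ×ˢ Finset.univ,
        y p.1 * (B p.1 p.2 * y p.2) := by
      rw [Finset.sum_product]
      simp [dotProduct, Matrix.mulVec, Finset.mul_sum]
    rw [lhs_eq, rhs_eq]
    calc ∑ p ∈ Finset.univ ×ˢ Finset.univ, a p.1 * (A p.1 p.2 * a p.2)
        ≤ ∑ p ∈ Finset.univ ×ˢ Finset.univ,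
            y (f p.1) * (B (f p.1) (f p.2) * y (f p.2)) := by
          apply Finset.sum_le_sum
          rintro ⟨u, w⟩ _
          rw [hyf, hyf]
          by_cases h : G.Adj u w
          · have : B (f u) (f w) = 1 := by
              rw [hB']; simp [hadj u w h]
            have : A u w = 1 := by rw [hA']; simp [h]
            have hB1 : B (f u) (f w) = 1 := by rw [hB']; simp [hadj u w h]
            rw [this, hB1]
          · have : A u w = 0 := by rw [hA']; simp [h]
            rw [this]
            simp only [zero_mul, mul_zero]
            have h1 := hBnn (f u) (f w)
            have h2 : 0 ≤ a u := abs_nonneg _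
            have h3 : 0 ≤ a w := abs_nonneg _
            positivity
      _ = ∑ p ∈ ((Finset.univ ×ˢ Finset.univ).image (Prod.map f f)),
            y p.1 * (B p.1 p.2 * y p.2) := by
          rw [Finset.sum_image (by
            rintro ⟨u1, w1⟩ _ ⟨u2, w2⟩ _ h
            simp only [Prod.map, Prod.mk.injEq] at h
            exact Prod.ext (hf h.1) (hf h.2))]
          simp [Prod.map]
      _ ≤ ∑ p ∈ Finset.univ ×ˢ Finset.univ, y p.1 * (B p.1 p.2 * y p.2) := by
          apply Finset.sum_le_sum_of_subset_of_nonneg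
          · intro p _; simp
          · intro p _ _
            have := hynn p.1; have := hynn p.2; have := hBnn p.1 p.2
            positivity
  have hyy : y ⬝ᵥ y = 1 := by
    have : y ⬝ᵥ y = ∑ w ∈ Finset.univ.image f, y w * y w := by
      rw [dotProduct]
      symm
      apply Finset.sum_subset (Finset.subset_univ _)
      intro w _ hw
      rw [hy0 w hw, mul_zero]
    rw [this, Finset.sum_image (fun u _ w _ h => hf h)]
    simp only [hyf]
    rw [← hvv]
    simp [dotProduct, ha, abs_mul_abs_self]
  have step3 : y ⬝ᵥ B *ᵥ y ≤ sSup (spectrum ℝ B) * (y ⬝ᵥ y) := quad_le_sSup B hB y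
  rw [hyy, mul_one] at step3
  linarith


lemma isAddr_nil (t : PTree) : isAddr t [] := by cases t; trivial

theorem stmt17 (t : PTree) {V : Type} [Fintype V] [DecidableEq V]
    (G : SimpleGraph V) [DecidableRel G.Adj] (hiso : Nonempty (G ≃g treeGraph t)) :
    sSup (spectrum ℝ (G.adjMatrix ℝ)) ≤
      sSup (spectrum ℝ ((leaningGraph (UH t - 1)).adjMatrix ℝ)) := by
  classical
  obtain ⟨e⟩ := hiso
  have hS : (UH t) ∈ {m : ℕ | ∃ t', TEquiv t t' ∧ planeUH t' = m} := by
    apply Nat.sInf_mem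
    exact ⟨planeUH t, t, tequiv_refl t, rfl⟩
  obtain ⟨t'', heqv, hUH⟩ := hS
  obtain ⟨f, hfinj, hfadj, -⟩ := tequiv_good t t'' heqv
  have hNe : Nonempty V := ⟨e.toEquiv.symm ⟨[], isAddr_nil t⟩⟩
  rw [← hUH]
  set F : V → Finset (Fin (planeUH t'' - 1)) := fun v => phi t'' (f (e v)) with hF
  apply spectral_mono G (leaningGraph (planeUH t'' - 1)) F
  · intro u v huv
    have h1 : e u = e v := by
      have := phi_inj t'' huv
      exact e.toEquiv.injective (hfinj this) |>.symm ▸ rfl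
    exact e.toEquiv.injective h1
  · intro u v huv
    exact phi_adj t'' _ _ (hfadj _ _ (e.map_rel_iff.mpr huv))
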